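/- The Edge-compelling chromatic number of the path P_n is 2 for n = 2, 3; it is 3 for n = 4, 5, 6; and it is 4 for all n ≥ 7. -/

import Mathlib

open SimpleGraph

/-- A proper coloring of `G` with `k` colors. -/
def ProperColoring {V : Type*} {k : ℕ} (G : SimpleGraph V) (c : V → Fin k) : Prop :=
  ∀ ⦃u v : V⦄, G.Adj u v → c u ≠ c v

/-- `f` selects a rainbow committee of the coloring `c`: one vertex of each color. -/
def IsRainbow {V : Type*} {k : ℕ} (c : V → Fin k) (f : Fin k → V) : Prop :=
  ∀ i : Fin k, c (f i) = i

/-- The coloring `c` compels property `P`: every rainbow committee has property `P`. -/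
def Compels {V : Type*} {k : ℕ} (c : V → Fin k) (P : Set V → Prop) : Prop :=
  ∀ f : Fin k → V, IsRainbow c f → P (Set.range f)

/-- The `P`-compelling chromatic number of `G`: the least number of colors in a proper
coloring, using every color, in which every rainbow committee has property `P`. -/
noncomputable def compellingChromNum {V : Type*} (G : SimpleGraph V) (P : Set V → Prop) : ℕ :=
  sInf {k : ℕ | ∃ c : V → Fin k,
    ProperColoring G c ∧ Function.Surjective c ∧ Compels c P}

/-- Property `Edge`: the set contains at least one edge of `G`. -/
def HasEdge {V : Type*} (G : SimpleGraph V) (S : Set V) : Prop :=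
  ∃ u ∈ S, ∃ v ∈ S, G.Adj u v

/-- The Edge-compelling chromatic number. -/
noncomputable def edgeCompellingChromNum {V : Type*} (G : SimpleGraph V) : ℕ :=
  compellingChromNum G (HasEdge G)

/-! ### Auxiliary material -/

instance instPathAdjDec {n : ℕ} : DecidableRel (pathGraph n).Adj :=
  fun _ _ => decidable_of_iff _ pathGraph_adj.symm

lemma val_mk' {n a : ℕ} (h : a < n) : ((⟨a, h⟩ : Fin n) : ℕ) = a := rfl

/-- The set whose infimum is the edge-compelling chromatic number. -/
def goodSet (n : ℕ) : Set ℕ :=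
  {k : ℕ | ∃ c : Fin n → Fin k,
    ProperColoring (pathGraph n) c ∧ Function.Surjective c ∧ Compels c (HasEdge (pathGraph n))}

lemma edge_eq_sInf (n : ℕ) : edgeCompellingChromNum (pathGraph n) = sInf (goodSet n) := rfl

lemma compels_of_exists {n k : ℕ} {c : Fin n → Fin k}
    (h : ∀ f : Fin k → Fin n, (∀ i, c (f i) = i) → ∃ i j, (pathGraph n).Adj (f i) (f j)) :
    Compels c (HasEdge (pathGraph n)) := by
  intro f hf
  obtain ⟨i, j, hij⟩ := h f hf
  exact ⟨f i, ⟨i, rfl⟩, f j, ⟨j, rfl⟩, hij⟩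

lemma not_compels {V : Type*} {k : ℕ} {G : SimpleGraph V} {c : V → Fin k} (f : Fin k → V)
    (hf : ∀ i, c (f i) = i) (h : ∀ i j, ¬ G.Adj (f i) (f j)) : ¬ Compels c (HasEdge G) := by
  intro hc
  obtain ⟨u, ⟨i, rfl⟩, w, ⟨j, rfl⟩, adj⟩ := hc f hf
  exact h i j adj

lemma fin3_pigeon : ∀ a b x i : Fin 3, a ≠ b → x ≠ a → x ≠ b → i ≠ a → i ≠ b → x = i := by
  decide

/-- Three pairwise differently colored, pairwise nonadjacent vertices defeat a 3-coloring. -/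
lemma badTriple {n : ℕ} {c : Fin n → Fin 3} {u v w : Fin n}
    (h1 : c u ≠ c v) (h2 : c u ≠ c w) (h3 : c v ≠ c w)
    (n1 : ¬ (pathGraph n).Adj u v) (n2 : ¬ (pathGraph n).Adj u w)
    (n3 : ¬ (pathGraph n).Adj v w) : ¬ Compels c (HasEdge (pathGraph n)) := by
  set g : Fin 3 → Fin n := fun i => if c u = i then u else if c v = i then v else w with hg
  have hmem : ∀ i, g i = u ∨ g i = v ∨ g i = w := by
    intro i; simp only [hg]; split_ifs <;> tauto
  apply not_compels g
  · intro i
    simp only [hg]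
    split_ifs with hu hv
    · exact hu
    · exact hv
    · exact fin3_pigeon (c u) (c v) (c w) i h1 h2.symm h3.symm (fun h => hu h.symm) (fun h => hv h.symm)
  · intro i j adj
    rcases hmem i with h | h | h <;> rcases hmem j with h' | h' | h' <;> rw [h, h'] at adj <;>
      first
        | exact (pathGraph n).irrefl adj
        | exact n1 adj | exact n2 adj | exact n3 adj
        | exact n1 adj.symm | exact n2 adj.symm | exact n3 adj.symm

abbrev D3 (p q r : Fin 3) : Prop := p ≠ q ∧ p ≠ r ∧ q ≠ r

set_option synthInstance.maxHeartbeats 2000000 in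
set_option synthInstance.maxSize 2000 in
set_option maxHeartbeats 1000000 in
lemma P7b : ∀ a0 a1 a2 a3 a4 a5 a6 : Fin 3,
    a0 ≠ a1 → a1 ≠ a2 → a2 ≠ a3 → a3 ≠ a4 → a4 ≠ a5 → a5 ≠ a6 →
    (∀ k : Fin 3, k = a0 ∨ k = a1 ∨ k = a2 ∨ k = a3 ∨ k = a4 ∨ k = a5 ∨ k = a6) →
    D3 a0 a2 a4 ∨ D3 a0 a2 a5 ∨ D3 a0 a2 a6 ∨ D3 a0 a3 a5 ∨ D3 a0 a3 a6 ∨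
    D3 a0 a4 a6 ∨ D3 a1 a3 a5 ∨ D3 a1 a3 a6 ∨ D3 a1 a4 a6 ∨ D3 a2 a4 a6 := by decide

/-! ### Lower bounds -/

lemma not_mem_zero {n : ℕ} (hn : 1 ≤ n) : 0 ∉ goodSet n := by
  rintro ⟨c, -, -, -⟩
  exact (c ⟨0, hn⟩).elim0

lemma not_mem_one {n : ℕ} (hn : 2 ≤ n) : 1 ∉ goodSet n := by
  rintro ⟨c, hp, -, -⟩
  have adj : (pathGraph n).Adj ⟨0, by omega⟩ ⟨1, by omega⟩ := pathGraph_adj.mpr (Or.inl rfl)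
  exact hp adj (Subsingleton.elim _ _)

lemma fin2_pigeon : ∀ a x i : Fin 2, x ≠ a → i ≠ a → x = i := by decide

lemma badPair {n : ℕ} {c : Fin n → Fin 2} {u v : Fin n}
    (h1 : c u ≠ c v) (n1 : ¬ (pathGraph n).Adj u v) : ¬ Compels c (HasEdge (pathGraph n)) := by
  set g : Fin 2 → Fin n := fun i => if c u = i then u else v with hg
  have hmem : ∀ i, g i = u ∨ g i = v := by
    intro i; simp only [hg]; split_ifs <;> tauto
  apply not_compels g
  · intro i
    simp only [hg]
    split_ifs with hu
    · exact hu
    · exact fin2_pigeon (c u) (c v) i h1.symm (fun h => hu h.symm)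
  · intro i j adj
    rcases hmem i with h | h <;> rcases hmem j with h' | h' <;> rw [h, h'] at adj <;>
      first
        | exact (pathGraph n).irrefl adj
        | exact n1 adj | exact n1 adj.symm

lemma not_mem_two {n : ℕ} (hn : 4 ≤ n) : 2 ∉ goodSet n := by
  rintro ⟨c, hp, -, hcomp⟩
  have h01 : c ⟨0, by omega⟩ ≠ c ⟨1, by omega⟩ := hp (pathGraph_adj.mpr (Or.inl rfl))
  have h12 : c ⟨1, by omega⟩ ≠ c ⟨2, by omega⟩ := hp (pathGraph_adj.mpr (Or.inl rfl))
  have h23 : c ⟨2, by omega⟩ ≠ c ⟨3, by omega⟩ := hp (pathGraph_adj.mpr (Or.inl rfl))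
  have h03 : c ⟨0, by omega⟩ ≠ c ⟨3, by omega⟩ := by
    have := (c ⟨0, by omega⟩).isLt; have := (c ⟨1, by omega⟩).isLt
    have := (c ⟨2, by omega⟩).isLt; have := (c ⟨3, by omega⟩).isLt
    rw [Fin.ne_iff_vne] at h01 h12 h23 ⊢; omega
  have nadj : ¬ (pathGraph n).Adj ⟨0, by omega⟩ ⟨3, by omega⟩ := by
    rw [pathGraph_adj]; simp only [val_mk']; omega
  exact badPair h03 nadj hcomp

lemma not_mem_three {n : ℕ} (hn : 7 ≤ n) : 3 ∉ goodSet n := by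
  rintro ⟨c, hp, hs, hcomp⟩
  have hlt : ∀ i : ℕ, i < 7 → i < n := by omega
  by_cases hall : ∀ k : Fin 3, ∃ i : Fin 7, c ⟨i.val, hlt i.val i.isLt⟩ = k
  · -- all three colors appear among the first seven vertices
    have hadj : ∀ i : ℕ, ∀ h : i + 1 < 7,
        c ⟨i, hlt i (by omega)⟩ ≠ c ⟨i + 1, hlt (i + 1) h⟩ := by
      intro i h
      exact hp (pathGraph_adj.mpr (Or.inl rfl))
    have hsurj : ∀ k : Fin 3, k = c ⟨0, hlt 0 (by omega)⟩ ∨ k = c ⟨1, hlt 1 (by omega)⟩ ∨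
        k = c ⟨2, hlt 2 (by omega)⟩ ∨ k = c ⟨3, hlt 3 (by omega)⟩ ∨
        k = c ⟨4, hlt 4 (by omega)⟩ ∨ k = c ⟨5, hlt 5 (by omega)⟩ ∨
        k = c ⟨6, hlt 6 (by omega)⟩ := by
      intro k
      obtain ⟨i, hi⟩ := hall k
      rcases i with ⟨iv, hiv⟩
      interval_cases iv <;> simp_all
    have key := P7b _ _ _ _ _ _ _
      (hadj 0 (by omega)) (hadj 1 (by omega)) (hadj 2 (by omega)) (hadj 3 (by omega))
      (hadj 4 (by omega)) (hadj 5 (by omega)) hsurj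
    have nadj : ∀ a b : ℕ, ∀ ha : a < n, ∀ hb : b < n, a + 2 ≤ b →
        ¬ (pathGraph n).Adj ⟨a, ha⟩ ⟨b, hb⟩ := by
      intro a b ha hb hab h
      rw [pathGraph_adj] at h
      simp only [val_mk'] at h
      omega
    rcases key with ⟨d1, d2, d3⟩ | ⟨d1, d2, d3⟩ | ⟨d1, d2, d3⟩ | ⟨d1, d2, d3⟩ | ⟨d1, d2, d3⟩ |
      ⟨d1, d2, d3⟩ | ⟨d1, d2, d3⟩ | ⟨d1, d2, d3⟩ | ⟨d1, d2, d3⟩ | ⟨d1, d2, d3⟩ <;>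
    · exact badTriple d1 d2 d3 (nadj _ _ _ _ (by omega)) (nadj _ _ _ _ (by omega))
        (nadj _ _ _ _ (by omega)) hcomp
  · -- some color is missing among the first seven vertices
    push_neg at hall
    obtain ⟨z, hz⟩ := hall
    obtain ⟨u, hu⟩ := hs z
    have hu7 : 7 ≤ (u : ℕ) := by
      by_contra h
      push_neg at h
      have := hz ⟨(u : ℕ), h⟩
      rw [Fin.eta] at this
      exact this hu
    have hzz : ∀ a : ℕ, ∀ h : a < 7, c ⟨a, hlt a h⟩ ≠ z := fun a h => hz ⟨a, h⟩
    set p : Fin n := ⟨0, by omega⟩ with hpdef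
    have hq : ∃ q : Fin n, ((q : ℕ) = 2 ∨ (q : ℕ) = 3) ∧ c p ≠ c q := by
      by_cases h02 : c p = c ⟨2, by omega⟩
      · refine ⟨⟨3, by omega⟩, Or.inr rfl, ?_⟩
        rw [h02]
        exact hp (pathGraph_adj.mpr (Or.inl rfl))
      · exact ⟨⟨2, by omega⟩, Or.inl rfl, h02⟩
    obtain ⟨q, hqval, hpq⟩ := hq
    have hcp : c p ≠ z := hzz 0 (by omega)
    have hcq : c q ≠ z := by
      have : c ⟨(q : ℕ), hlt (q : ℕ) (by omega)⟩ ≠ z := hzz (q : ℕ) (by omega)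
      rwa [Fin.eta] at this
    have huq : c u ≠ c q := by rw [hu]; exact fun h => hcq h.symm
    have hup : c u ≠ c p := by rw [hu]; exact fun h => hcp h.symm
    have nadj2 : ∀ a b : Fin n, (a : ℕ) + 2 ≤ (b : ℕ) → ¬ (pathGraph n).Adj a b := by
      intro a b hab h
      rw [pathGraph_adj] at h
      omega
    refine badTriple (u := u) (v := p) (w := q) hup huq hpq ?_ ?_ ?_ hcomp
    · exact fun h => nadj2 p u (by simp [hpdef]; omega) h.symm
    · exact fun h => nadj2 q u (by omega) h.symm
    · exact nadj2 p q (by simp [hpdef]; omega)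

/-! ### Upper bound for n ≥ 4 : four colors suffice -/

lemma mem_four {n : ℕ} (hn : 4 ≤ n) : 4 ∈ goodSet n := by
  set c : Fin n → Fin 4 := fun v =>
    if (v : ℕ) = 0 then 2 else if (v : ℕ) = 1 then 3 else ⟨(v : ℕ) % 2, by omega⟩ with hc
  have hval : ∀ v : Fin n, (c v : ℕ) =
      if (v : ℕ) = 0 then 2 else if (v : ℕ) = 1 then 3 else (v : ℕ) % 2 := by
    intro v
    simp only [hc]
    split_ifs <;> rfl
  refine ⟨c, ?_, ?_, compels_of_exists ?_⟩
  · intro a b adj h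
    rw [pathGraph_adj] at adj
    have ha := congrArg Fin.val h
    rw [hval a, hval b] at ha
    split_ifs at ha <;> omega
  · intro i
    fin_cases i
    · exact ⟨⟨2, by omega⟩, Fin.ext (by rw [hval]; norm_num)⟩
    · exact ⟨⟨3, by omega⟩, Fin.ext (by rw [hval]; norm_num)⟩
    · exact ⟨⟨0, by omega⟩, Fin.ext (by rw [hval]; norm_num)⟩
    · exact ⟨⟨1, by omega⟩, Fin.ext (by rw [hval]; norm_num)⟩
  · intro f hf
    have h2 : ((f 2 : Fin n) : ℕ) = 0 := by
      have := congrArg Fin.val (hf 2)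
      rw [hval] at this
      split_ifs at this <;> omega
    have h3 : ((f 3 : Fin n) : ℕ) = 1 := by
      have := congrArg Fin.val (hf 3)
      rw [hval] at this
      split_ifs at this <;> omega
    exact ⟨2, 3, pathGraph_adj.mpr (Or.inl (by omega))⟩

/-! ### Memberships for small n -/

lemma mem_small {n k : ℕ} (c : Fin n → Fin k) (h1 : ProperColoring (pathGraph n) c)
    (h2 : Function.Surjective c)
    (h3 : ∀ f : Fin k → Fin n, (∀ i, c (f i) = i) → ∃ i j, (pathGraph n).Adj (f i) (f j)) :
    k ∈ goodSet n :=
  ⟨c, h1, h2, compels_of_exists h3⟩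

lemma mem_two_2 : 2 ∈ goodSet 2 := by
  refine mem_small ![0, 1] ?_ ?_ ?_ <;> first | decide | (unfold ProperColoring; decide)

lemma mem_two_3 : 2 ∈ goodSet 3 := by
  refine mem_small ![0, 1, 0] ?_ ?_ ?_ <;> first | decide | (unfold ProperColoring; decide)

lemma mem_three_4 : 3 ∈ goodSet 4 := by
  refine mem_small ![0, 1, 2, 1] ?_ ?_ ?_ <;> first | decide | (unfold ProperColoring; decide)

set_option maxRecDepth 10000 in
lemma mem_three_5 : 3 ∈ goodSet 5 := by
  refine mem_small ![0, 1, 2, 1, 0] ?_ ?_ ?_ <;>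
    first | decide | (unfold ProperColoring; decide)

set_option maxRecDepth 10000 in
lemma mem_three_6 : 3 ∈ goodSet 6 := by
  refine mem_small ![0, 1, 0, 1, 2, 1] ?_ ?_ ?_ <;>
    first | decide | (unfold ProperColoring; decide)

/-! ### Putting it together -/

lemma sInf_eval {n m : ℕ} (hmem : m ∈ goodSet n) (hlb : ∀ k ∈ goodSet n, m ≤ k) :
    edgeCompellingChromNum (pathGraph n) = m := by
  rw [edge_eq_sInf]
  exact le_antisymm (Nat.sInf_le hmem) (le_csInf ⟨m, hmem⟩ hlb)

theorem edgeCompellingChromNum_pathGraph :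
    edgeCompellingChromNum (pathGraph 2) = 2 ∧
    edgeCompellingChromNum (pathGraph 3) = 2 ∧
    edgeCompellingChromNum (pathGraph 4) = 3 ∧
    edgeCompellingChromNum (pathGraph 5) = 3 ∧
    edgeCompellingChromNum (pathGraph 6) = 3 ∧
    ∀ n : ℕ, 7 ≤ n → edgeCompellingChromNum (pathGraph n) = 4 := by
  refine ⟨?_, ?_, ?_, ?_, ?_, ?_⟩
  · refine sInf_eval mem_two_2 ?_
    intro k hk
    by_contra h
    interval_cases k
    · exact not_mem_zero (by omega) hk
    · exact not_mem_one (by omega) hk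
  · refine sInf_eval mem_two_3 ?_
    intro k hk
    by_contra h
    interval_cases k
    · exact not_mem_zero (by omega) hk
    · exact not_mem_one (by omega) hk
  · refine sInf_eval mem_three_4 ?_
    intro k hk
    by_contra h
    interval_cases k
    · exact not_mem_zero (by omega) hk
    · exact not_mem_one (by omega) hk
    · exact not_mem_two (by omega) hk
  · refine sInf_eval mem_three_5 ?_
    intro k hk
    by_contra h
    interval_cases k
    · exact not_mem_zero (by omega) hk
    · exact not_mem_one (by omega) hk
    · exact not_mem_two (by omega) hk
  · refine sInf_eval mem_three_6 ?_
    intro k hk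
    by_contra h
    interval_cases k
    · exact not_mem_zero (by omega) hk
    · exact not_mem_one (by omega) hk
    · exact not_mem_two (by omega) hk
  · intro n hn
    refine sInf_eval (mem_four (by omega)) ?_
    intro k hk
    by_contra h
    interval_cases k
    · exact not_mem_zero (by omega) hk
    · exact not_mem_one (by omega) hk
    · exact not_mem_two (by omega) hk
    · exact not_mem_three (by omega) hk
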